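/- Let V be a finite set, and for each v ∈ V let l(v) > 0, λ(v) > 0 and Λ(v) ≥ 0 be real numbers, and let D be a real number. Then the set { μ : V → ℝ | for all v ∈ V, μ(v) > l(v)·(Λ(v)+λ(v)), and Σ_{v∈V} l(v)·μ(v)/((μ(v) − l(v)·Λ(v))·(μ(v) − l(v)·(Λ(v)+λ(v)))) ≤ D } is a convex subset of V → ℝ. -/

import Mathlib

open Set

/-- Convexity of the partial-fraction decomposition on `Ioi b`. -/
lemma aux_decomp_convex {a b : ℝ} (ha : 0 ≤ a) (hab : a < b) :
    ConvexOn ℝ (Set.Ioi b)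
      (fun x => (b / (b - a)) * (x - b)⁻¹ - (a / (b - a)) * (x - a)⁻¹) := by
  have hd : 0 < b - a := by linarith
  have hb : 0 < b := lt_of_le_of_lt ha hab
  refine convexOn_of_hasDerivWithinAt2_nonneg (convex_Ioi b) ?_
    (f' := fun x => -(b / (b - a)) * ((x - b) ^ 2)⁻¹ + (a / (b - a)) * ((x - a) ^ 2)⁻¹)
    (f'' := fun x => 2 * (b / (b - a)) * ((x - b) ^ 3)⁻¹ - 2 * (a / (b - a)) * ((x - a) ^ 3)⁻¹)
    ?_ ?_ ?_
  · -- continuity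
    apply ContinuousOn.sub
    · exact (continuousOn_const.mul ((continuousOn_id.sub continuousOn_const).inv₀
        (fun x hx => by simp only [mem_Ioi] at hx; intro h; simp only [Pi.sub_apply, id_eq] at h; linarith)))
    · exact (continuousOn_const.mul ((continuousOn_id.sub continuousOn_const).inv₀
        (fun x hx => by simp only [mem_Ioi] at hx; intro h; simp only [Pi.sub_apply, id_eq] at h; linarith)))
  · intro x hx
    rw [interior_Ioi] at hx
    have hxb : x - b ≠ 0 := by simp only [mem_Ioi] at hx; intro h; linarith
    have hxa : x - a ≠ 0 := by simp only [mem_Ioi] at hx; intro h; linarith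
    have h1 : HasDerivAt (fun x : ℝ => (x - b)⁻¹) (-1 / (x - b) ^ 2) x := by
      have := ((hasDerivAt_id x).sub_const b).inv hxb
      simpa [Pi.inv_def] using this
    have h2 : HasDerivAt (fun x : ℝ => (x - a)⁻¹) (-1 / (x - a) ^ 2) x := by
      have := ((hasDerivAt_id x).sub_const a).inv hxa
      simpa [Pi.inv_def] using this
    have := ((h1.const_mul (b / (b - a))).sub (h2.const_mul (a / (b - a))))
    refine HasDerivAt.hasDerivWithinAt ?_
    convert this using 1
    · rfl
    field_simp
    ring
  · intro x hx
    rw [interior_Ioi] at hx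
    have hxb : x - b ≠ 0 := by simp only [mem_Ioi] at hx; intro h; linarith
    have hxa : x - a ≠ 0 := by simp only [mem_Ioi] at hx; intro h; linarith
    have h1 : HasDerivAt (fun x : ℝ => ((x - b) ^ 2)⁻¹)
        (-(2 * (x - b)) / ((x - b) ^ 2) ^ 2) x := by
      have := (((hasDerivAt_id x).sub_const b).pow 2).inv (pow_ne_zero 2 hxb)
      simpa [Pi.inv_def] using this
    have h2 : HasDerivAt (fun x : ℝ => ((x - a) ^ 2)⁻¹)
        (-(2 * (x - a)) / ((x - a) ^ 2) ^ 2) x := by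
      have := (((hasDerivAt_id x).sub_const a).pow 2).inv (pow_ne_zero 2 hxa)
      simpa [Pi.inv_def] using this
    have := ((h1.const_mul (-(b / (b - a)))).add (h2.const_mul (a / (b - a))))
    refine HasDerivAt.hasDerivWithinAt ?_
    convert this using 1
    · rfl
    field_simp
    ring
  · intro x hx
    rw [interior_Ioi] at hx
    simp only [mem_Ioi] at hx
    have hxb : 0 < x - b := by linarith
    have hxa : 0 < x - a := by linarith
    have h3b : 0 < (x - b) ^ 3 := by positivity
    have h3a : 0 < (x - a) ^ 3 := by positivity
    rw [sub_nonneg]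
    have e1 : 2 * (a / (b - a)) * ((x - a) ^ 3)⁻¹ = (2 * a) / ((b - a) * (x - a) ^ 3) := by
      field_simp
    have e2 : 2 * (b / (b - a)) * ((x - b) ^ 3)⁻¹ = (2 * b) / ((b - a) * (x - b) ^ 3) := by
      field_simp
    rw [e1, e2, div_le_div_iff₀ (by positivity) (by positivity)]
    have hba : (x - b) ^ 3 ≤ (x - a) ^ 3 := by
      apply pow_le_pow_left₀ hxb.le (by linarith)
    nlinarith [mul_le_mul_of_nonneg_left hba ha, mul_le_mul_of_nonneg_right hab.le h3a.le,
      mul_pos hd h3a]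

/-- Convexity of the sojourn time at a single VNF, as a function of the capability. -/
lemma term_convex {l a b : ℝ} (hl : 0 < l) (ha : 0 ≤ a) (hab : a < b) :
    ConvexOn ℝ (Set.Ioi b) (fun x => l * x / ((x - a) * (x - b))) := by
  have h := (aux_decomp_convex ha hab).smul hl.le
  refine h.congr fun x hx => ?_
  simp only [mem_Ioi] at hx
  have hxb : x - b ≠ 0 := by intro h; linarith
  have hxa : x - a ≠ 0 := by intro h; linarith
  have hba : b - a ≠ 0 := by intro h; linarith
  simp only [smul_eq_mul]
  field_simp
  ring

lemma convexOn_sum' {ι E : Type*} [AddCommGroup E] [Module ℝ E] (s : Finset ι)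
    {S : Set E} (hS : Convex ℝ S) {f : ι → E → ℝ} (hf : ∀ i ∈ s, ConvexOn ℝ S (f i)) :
    ConvexOn ℝ S (fun x => ∑ i ∈ s, f i x) := by
  classical
  induction s using Finset.induction with
  | empty => simpa using convexOn_const 0 hS
  | @insert a t hi ih =>
    simp only [Finset.sum_insert hi]
    exact (hf a (Finset.mem_insert_self a t)).add
      (ih fun i his => hf i (Finset.mem_insert_of_mem his))

/-- The feasible set of capability assignments `μ : V → ℝ` satisfying, for each VNF `v`,
the stability condition `μ(v) > l(v)·(Λ(v)+λ(v))` together with the maximum-delay constraint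
`Σ_v l(v)·μ(v)/((μ(v) − l(v)·Λ(v))·(μ(v) − l(v)·(Λ(v)+λ(v)))) ≤ D`, is convex. -/
theorem feasible_set_convex (V : Type*) [Fintype V] (l lam Lam : V → ℝ) (D : ℝ)
    (hl : ∀ v, 0 < l v) (hlam : ∀ v, 0 < lam v) (hLam : ∀ v, 0 ≤ Lam v) :
    Convex ℝ {μ : V → ℝ |
      (∀ v, l v * (Lam v + lam v) < μ v) ∧
      ∑ v, l v * μ v / ((μ v - l v * Lam v) * (μ v - l v * (Lam v + lam v))) ≤ D} := by
  set b : V → ℝ := fun v => l v * (Lam v + lam v) with hb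
  set S : Set (V → ℝ) := {μ | ∀ v, b v < μ v} with hSdef
  have hSpi : S = Set.pi Set.univ (fun v => Ioi (b v)) := by
    ext μ; simp [Set.mem_pi, hSdef]
  have hS : Convex ℝ S := by
    rw [hSpi]; exact convex_pi fun i _ => convex_Ioi _
  have hterm : ∀ v : V, ConvexOn ℝ S
      (fun μ : V → ℝ => l v * μ v / ((μ v - l v * Lam v) * (μ v - b v))) := by
    intro v
    have ha : (0:ℝ) ≤ l v * Lam v := mul_nonneg (hl v).le (hLam v)
    have hab : l v * Lam v < b v := by
      have : 0 < l v * lam v := mul_pos (hl v) (hlam v)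
      simp only [hb]; nlinarith
    have hc := (term_convex (hl v) ha hab).comp_affineMap
      ((LinearMap.proj v : (V → ℝ) →ₗ[ℝ] ℝ).toAffineMap)
    refine hc.subset (fun μ hμ => ?_) hS
    simpa using hμ v
  have hF : ConvexOn ℝ S
      (fun μ : V → ℝ => ∑ v, l v * μ v / ((μ v - l v * Lam v) * (μ v - b v))) :=
    convexOn_sum' Finset.univ hS fun v _ => hterm v
  have := hF.convex_le D
  convert this using 1
  rfl
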